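/- Let I ⊆ ℝ^d be a nonempty set of vectors all of whose coordinates are strictly positive, let X = {x ∈ [0,1]^d : Σᵢ xᵢ = 1} be the standard simplex, and define F : X → ℝ by F(x) = inf_{α ∈ I} ⟨x, α⟩. Then F is continuous on X. -/

import Mathlib

private lemma coord_abs_le_norm {d : ℕ} (x : EuclideanSpace ℝ (Fin d)) (i : Fin d) :
    |x i| ≤ ‖x‖ := by
  rw [EuclideanSpace.norm_eq]
  calc |x i| = Real.sqrt (|x i| ^ 2) := by rw [Real.sqrt_sq_eq_abs, abs_abs]
    _ ≤ _ := by
        apply Real.sqrt_le_sqrt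
        exact Finset.single_le_sum (f := fun j => ‖x j‖ ^ 2) (fun j _ => by positivity)
          (Finset.mem_univ i)

set_option maxHeartbeats 1000000 in
/-- Continuity of the infimum of linear functions with positive coefficients on the simplex. -/
theorem inf_linear_continuousOn (d : ℕ) (I : Set (EuclideanSpace ℝ (Fin d)))
    (hI : I.Nonempty) (hpos : ∀ α ∈ I, ∀ i, 0 < α i) :
    ContinuousOn
      (fun x : EuclideanSpace ℝ (Fin d) => sInf {v : ℝ | ∃ α ∈ I, v = (inner ℝ x α : ℝ)})
      {x : EuclideanSpace ℝ (Fin d) | (∀ i, x i ∈ Set.Icc (0 : ℝ) 1) ∧ ∑ i, x i = 1} := by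
  have hinner : ∀ x α : EuclideanSpace ℝ (Fin d), (inner ℝ x α : ℝ) = ∑ i, x i * α i := by
    intro x α
    simp [PiLp.inner_apply, RCLike.inner_apply, mul_comm]
  set A : EuclideanSpace ℝ (Fin d) → Set ℝ :=
    fun x => {v : ℝ | ∃ α ∈ I, v = (inner ℝ x α : ℝ)} with hA
  obtain ⟨α0, hα0⟩ := hI
  have hA_ne : ∀ x, (A x).Nonempty := fun x => ⟨_, α0, hα0, rfl⟩
  have hA_mem : ∀ x, ∀ α ∈ I, (inner ℝ x α : ℝ) ∈ A x := fun x α hα => ⟨α, hα, rfl⟩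
  have hnn : ∀ x : EuclideanSpace ℝ (Fin d), (∀ i, 0 ≤ x i) → ∀ v ∈ A x, 0 ≤ v := by
    rintro x hx v ⟨α, hα, rfl⟩
    rw [hinner]
    exact Finset.sum_nonneg fun i _ => mul_nonneg (hx i) (hpos α hα i).le
  have hbdd : ∀ x : EuclideanSpace ℝ (Fin d), (∀ i, 0 ≤ x i) → BddBelow (A x) :=
    fun x hx => ⟨0, fun v hv => hnn x hx v hv⟩
  intro x0 hx0
  obtain ⟨hIcc, hsum⟩ := hx0
  have hx0nn : ∀ i, 0 ≤ x0 i := fun i => (hIcc i).1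
  have hFnn : 0 ≤ sInf (A x0) := le_csInf (hA_ne x0) (hnn x0 hx0nn)
  set C : ℝ := (inner ℝ x0 α0 : ℝ) with hC
  have hFC : sInf (A x0) ≤ C := csInf_le (hbdd x0 hx0nn) (hA_mem x0 α0 hα0)
  have hC0 : 0 ≤ C := le_trans hFnn hFC
  -- there is a strictly positive coordinate
  have hpossum : ∑ i, (fun _ : Fin d => (0 : ℝ)) i < ∑ i, x0 i := by simp [hsum]
  obtain ⟨i0, _, hi0⟩ := Finset.exists_lt_of_sum_lt hpossum
  set S : Finset (Fin d) := Finset.univ.filter (fun i => 0 < x0 i) with hSdef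
  have hS : S.Nonempty := ⟨i0, by simp [hSdef, hi0]⟩
  set m : ℝ := S.inf' hS (fun i => x0 i) with hm
  have hm0 : 0 < m := by
    rw [hm, Finset.lt_inf'_iff]
    intro i hi
    simpa [hSdef] using hi
  have hmle : ∀ i ∈ S, m ≤ x0 i := fun i hi => Finset.inf'_le _ hi
  rw [Metric.continuousWithinAt_iff]
  intro ε hε
  -- choose a near-optimal α1 for the upper bound
  have hlt : sInf (A x0) < sInf (A x0) + ε / 2 := by linarith
  obtain ⟨v1, hv1, hv1lt⟩ := exists_lt_of_csInf_lt (hA_ne x0) hlt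
  obtain ⟨α1, hα1, rfl⟩ := hv1
  set N : ℝ := ‖α1‖ with hN
  have hN0 : 0 ≤ N := norm_nonneg _
  refine ⟨min (min (m / 2) (ε * m / (2 * (C + 1)))) (ε / (2 * (N + 1))), by positivity,
    fun y hy hdist => ?_⟩
  obtain ⟨hyIcc, hysum⟩ := hy
  have hynn : ∀ i, 0 ≤ y i := fun i => (hyIcc i).1
  set δ : ℝ := min (min (m / 2) (ε * m / (2 * (C + 1)))) (ε / (2 * (N + 1))) with hδdef
  have hδ0 : 0 < δ := by positivity
  have hδ1 : δ ≤ m / 2 := le_trans (min_le_left _ _) (min_le_left _ _)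
  have hδ2 : δ ≤ ε * m / (2 * (C + 1)) := le_trans (min_le_left _ _) (min_le_right _ _)
  have hδ3 : δ ≤ ε / (2 * (N + 1)) := min_le_right _ _
  have hcoord : ∀ i, |y i - x0 i| ≤ dist y x0 := by
    intro i
    rw [dist_eq_norm]
    have := coord_abs_le_norm (y - x0) i
    simpa using this
  rw [Real.dist_eq, abs_sub_lt_iff]
  constructor
  · -- upper bound : F y < F x0 + ε
    have h1 : sInf (A y) ≤ (inner ℝ y α1 : ℝ) := csInf_le (hbdd y hynn) (hA_mem y α1 hα1)
    have h2 : (inner ℝ y α1 : ℝ) - (inner ℝ x0 α1 : ℝ) ≤ dist y x0 * N := by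
      have e : (inner ℝ y α1 : ℝ) - (inner ℝ x0 α1 : ℝ) = (inner ℝ (y - x0) α1 : ℝ) := by
        rw [inner_sub_left]
      rw [e, dist_eq_norm]
      exact le_trans (real_inner_le_norm _ _) le_rfl
    have h3 : dist y x0 * N ≤ δ * (N + 1) := by
      have := hdist.le
      nlinarith [dist_nonneg (x := y) (y := x0)]
    have h4 : δ * (N + 1) ≤ ε / 2 := by
      rw [le_div_iff₀ (by positivity)] at hδ3
      linarith
    linarith
  · -- lower bound : F x0 - ε < F y
    have key : sInf (A x0) - ε / 2 ≤ sInf (A y) := by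
      apply le_csInf (hA_ne y)
      rintro v ⟨α, hα, rfl⟩
      have hyi : ∀ i ∈ S, (1 - δ / m) * x0 i ≤ y i := by
        intro i hi
        have h1 : x0 i - δ ≤ y i := by
          have := (abs_le.mp (hcoord i)).1
          linarith [hdist.le]
        have h2 : δ ≤ (δ / m) * x0 i := by
          have : (δ / m) * m ≤ (δ / m) * x0 i :=
            mul_le_mul_of_nonneg_left (hmle i hi) (by positivity)
          rwa [div_mul_cancel₀ _ hm0.ne'] at this
        nlinarith
      have hc0 : 0 ≤ 1 - δ / m := by
        have : δ / m ≤ 1 / 2 := by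
          rw [div_le_div_iff₀ hm0 (by norm_num)]
          linarith
        linarith
      have step1 : ∑ i ∈ S, y i * α i ≤ ∑ i, y i * α i := by
        apply Finset.sum_le_sum_of_subset_of_nonneg (Finset.subset_univ S)
        exact fun i _ _ => mul_nonneg (hynn i) (hpos α hα i).le
      have step2 : (1 - δ / m) * ∑ i ∈ S, x0 i * α i ≤ ∑ i ∈ S, y i * α i := by
        rw [Finset.mul_sum]
        apply Finset.sum_le_sum
        intro i hi
        have := mul_le_mul_of_nonneg_right (hyi i hi) (hpos α hα i).le
        calc (1 - δ / m) * (x0 i * α i) = ((1 - δ / m) * x0 i) * α i := by ring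
          _ ≤ y i * α i := this
      have step3 : ∑ i ∈ S, x0 i * α i = ∑ i, x0 i * α i := by
        apply Finset.sum_subset (Finset.subset_univ S)
        intro i _ hiS
        have : x0 i = 0 := by
          have h' : ¬ 0 < x0 i := by simpa [hSdef] using hiS
          linarith [hx0nn i, not_lt.mp h']
        simp [this]
      have hx0α : sInf (A x0) ≤ (inner ℝ x0 α : ℝ) := csInf_le (hbdd x0 hx0nn) (hA_mem x0 α hα)
      have step4 : (1 - δ / m) * sInf (A x0) ≤ (inner ℝ y α : ℝ) := by
        rw [hinner]
        calc (1 - δ / m) * sInf (A x0) ≤ (1 - δ / m) * (inner ℝ x0 α : ℝ) :=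
              mul_le_mul_of_nonneg_left hx0α hc0
          _ = (1 - δ / m) * ∑ i, x0 i * α i := by rw [hinner]
          _ = (1 - δ / m) * ∑ i ∈ S, x0 i * α i := by rw [step3]
          _ ≤ ∑ i ∈ S, y i * α i := step2
          _ ≤ ∑ i, y i * α i := step1
      have hsmall : (δ / m) * sInf (A x0) ≤ ε / 2 := by
        have h1 : (δ / m) * sInf (A x0) ≤ (δ / m) * C :=
          mul_le_mul_of_nonneg_left hFC (by positivity)
        have h2 : δ * (2 * (C + 1)) ≤ ε * m := by
          rw [le_div_iff₀ (by positivity)] at hδ2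
          exact hδ2
        have h3 : (δ / m) * C ≤ ε / 2 := by
          rw [div_mul_eq_mul_div, div_le_div_iff₀ hm0 (by norm_num)]
          nlinarith [hδ0.le]
        linarith
      have expand : (1 - δ / m) * sInf (A x0) = sInf (A x0) - (δ / m) * sInf (A x0) := by ring
      rw [expand] at step4
      linarith [step4, hsmall]
    linarith
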